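/- arXiv:1101.1527 — 4 statements merged into one kernel-verified Lean document; each statement's English description precedes it below -/
import Mathlib

section
/- Fix μ₀ ≥ 0 and s ∈ ℕ. For μ > μ₀, let X be Poisson distributed with mean μ − μ₀ and Y Poisson distributed with mean μ. Then the total variation-type sum ∑_{t=0}^∞ |P[X = t − s] − P[Y = t]| tends to 0 as μ → ∞ (where P[X = t − s] = 0 for t < s). -/
open Filter

/-- The Poisson probability mass function with mean `l`. -/
noncomputable def poisP (l : ℝ) (k : ℕ) : ℝ := Real.exp (-l) * l ^ k / (Nat.factorial k)


lemma poisP_nonneg {l : ℝ} (hl : 0 ≤ l) (k : ℕ) : 0 ≤ poisP l k := by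
  unfold poisP; positivity

lemma hasSum_poisP {l : ℝ} (hl : 0 ≤ l) : HasSum (poisP l) 1 := by
  have := ProbabilityTheory.poissonPMFRealSum ⟨l, hl⟩
  exact this

lemma summable_poisP {l : ℝ} (hl : 0 ≤ l) : Summable (poisP l) := (hasSum_poisP hl).summable

lemma poisP_succ {l : ℝ} (n : ℕ) : (n + 1 : ℝ) * poisP l (n+1) = l * poisP l n := by
  unfold poisP
  rw [Nat.factorial_succ]
  push_cast
  have h1 : ((n:ℝ) + 1) ≠ 0 := by positivity
  have h2 : ((Nat.factorial n : ℝ)) ≠ 0 := by positivity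
  field_simp
  ring

lemma hasSum_mul_poisP {l : ℝ} (hl : 0 ≤ l) : HasSum (fun k : ℕ => (k:ℝ) * poisP l k) l := by
  have h : HasSum (fun n : ℕ => ((n:ℝ)+1) * poisP l (n+1)) l := by
    have := (hasSum_poisP hl).mul_left l
    simpa [poisP_succ] using this
  have h2 := (hasSum_nat_add_iff (f := fun k : ℕ => (k:ℝ) * poisP l k) 1).mp (by push_cast; simpa using h)
  simpa using h2

lemma hasSum_mul2_poisP {l : ℝ} (hl : 0 ≤ l) :
    HasSum (fun k : ℕ => (k:ℝ) * ((k:ℝ) - 1) * poisP l k) (l * l) := by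
  have h : HasSum (fun n : ℕ => ((n:ℝ)+1) * (((n:ℝ)+1) - 1) * poisP l (n+1)) (l * l) := by
    have := (hasSum_mul_poisP hl).mul_left l
    have he : (fun n : ℕ => ((n:ℝ)+1) * (((n:ℝ)+1) - 1) * poisP l (n+1))
        = fun n : ℕ => l * ((n:ℝ) * poisP l n) := by
      funext n
      have := poisP_succ (l := l) n
      calc ((n:ℝ)+1) * (((n:ℝ)+1) - 1) * poisP l (n+1)
          = (n:ℝ) * (((n:ℝ)+1) * poisP l (n+1)) := by ring
        _ = (n:ℝ) * (l * poisP l n) := by rw [this]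
        _ = l * ((n:ℝ) * poisP l n) := by ring
    rw [he]; exact this
  have h2 := (hasSum_nat_add_iff
    (f := fun k : ℕ => (k:ℝ) * ((k:ℝ) - 1) * poisP l k) 1).mp (by push_cast; simpa using h)
  simpa using h2

lemma hasSum_var_poisP {l : ℝ} (hl : 0 ≤ l) :
    HasSum (fun k : ℕ => ((k:ℝ) - l)^2 * poisP l k) l := by
  have h := ((hasSum_mul2_poisP hl).add ((hasSum_mul_poisP hl).mul_left (1 - 2*l))).add
    ((hasSum_poisP hl).mul_left (l^2))
  have he : (fun k : ℕ => ((k:ℝ) * ((k:ℝ) - 1) * poisP l k + (1 - 2*l) * ((k:ℝ) * poisP l k))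
      + l^2 * poisP l k) = fun k : ℕ => ((k:ℝ) - l)^2 * poisP l k := by
    funext k; ring
  rw [he] at h
  have : l * l + (1 - 2*l) * l + l^2 * 1 = l := by ring
  rwa [this] at h

lemma absmoment_le {l : ℝ} (hl : 0 < l) :
    ∑' k : ℕ, |(k:ℝ) - l| * poisP l k ≤ Real.sqrt l := by
  have hs : 0 < Real.sqrt l := Real.sqrt_pos.mpr hl
  have hpt : ∀ k : ℕ, |(k:ℝ) - l| * poisP l k
      ≤ (Real.sqrt l * poisP l k + ((k:ℝ) - l)^2 * poisP l k / Real.sqrt l) / 2 := by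
    intro k
    have hp := poisP_nonneg hl.le k
    have key : |(k:ℝ) - l| ≤ (Real.sqrt l + ((k:ℝ) - l)^2 / Real.sqrt l) / 2 := by
      have h2 : Real.sqrt l * Real.sqrt l = l := Real.mul_self_sqrt hl.le
      have h3 : ((k:ℝ)-l)^2/Real.sqrt l * Real.sqrt l = ((k:ℝ)-l)^2 :=
        div_mul_cancel₀ _ hs.ne'
      nlinarith [sq_nonneg (|(k:ℝ)-l| - Real.sqrt l), sq_abs ((k:ℝ)-l),
        abs_nonneg ((k:ℝ)-l), hs]
    calc |(k:ℝ) - l| * poisP l k ≤ ((Real.sqrt l + ((k:ℝ) - l)^2 / Real.sqrt l) / 2) * poisP l k :=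
          mul_le_mul_of_nonneg_right key hp
      _ = (Real.sqrt l * poisP l k + ((k:ℝ) - l)^2 * poisP l k / Real.sqrt l) / 2 := by ring
  have hRHS : HasSum (fun k : ℕ => (Real.sqrt l * poisP l k + ((k:ℝ) - l)^2 * poisP l k / Real.sqrt l) / 2)
      ((Real.sqrt l * 1 + l / Real.sqrt l) / 2) := by
    exact (((hasSum_poisP hl.le).mul_left (Real.sqrt l)).add ((hasSum_var_poisP hl.le).div_const (Real.sqrt l))).div_const 2
  have hval : (Real.sqrt l * 1 + l / Real.sqrt l) / 2 = Real.sqrt l := by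
    rw [Real.div_sqrt]; ring
  have hsummL : Summable (fun k : ℕ => |(k:ℝ) - l| * poisP l k) :=
    Summable.of_nonneg_of_le (fun k => mul_nonneg (abs_nonneg _) (poisP_nonneg hl.le k)) hpt hRHS.summable
  calc ∑' k : ℕ, |(k:ℝ) - l| * poisP l k ≤ ∑' k, (Real.sqrt l * poisP l k + ((k:ℝ) - l)^2 * poisP l k / Real.sqrt l) / 2 :=
        Summable.tsum_le_tsum hpt hsummL hRHS.summable
    _ = Real.sqrt l := by rw [hRHS.tsum_eq, hval]

/-- shift operator -/
noncomputable def S (f : ℕ → ℝ) : ℕ → ℝ := fun t => if t = 0 then 0 else f (t - 1)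

lemma S_zero (f : ℕ → ℝ) : S f 0 = 0 := rfl
lemma S_succ (f : ℕ → ℝ) (t : ℕ) : S f (t+1) = f t := rfl

lemma S_iter (f : ℕ → ℝ) (k : ℕ) : ∀ t, S^[k] f t = if k ≤ t then f (t - k) else 0 := by
  induction k with
  | zero => intro t; simp
  | succ k ih =>
      intro t
      rw [Function.iterate_succ_apply']
      cases t with
      | zero => simp [S_zero]
      | succ n =>
          rw [S_succ, ih]
          simp only [Nat.succ_sub_succ]
          congr 1
          simp [Nat.succ_le_succ_iff]

lemma S_nonneg {f : ℕ → ℝ} (hf : ∀ t, 0 ≤ f t) (t : ℕ) : 0 ≤ S f t := by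
  unfold S; split <;> [rfl; exact hf _]

lemma summable_S_iff {f : ℕ → ℝ} : Summable (S f) ↔ Summable f := by
  rw [← summable_nat_add_iff 1]
  constructor
  · intro h; simpa [S_succ] using h
  · intro h; simpa [S_succ] using h

lemma tsum_S (f : ℕ → ℝ) : ∑' t, S f t = ∑' t, f t := by
  by_cases hf : Summable f
  · have hS : Summable (S f) := summable_S_iff.mpr hf
    rw [Summable.tsum_eq_zero_add hS]
    simp [S_zero, S_succ]
  · rw [tsum_eq_zero_of_not_summable hf,
      tsum_eq_zero_of_not_summable (fun h => hf (summable_S_iff.mp h))]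

lemma abs_S_sub (f g : ℕ → ℝ) (t : ℕ) : |S f t - S g t| = S (fun u => |f u - g u|) t := by
  cases t with
  | zero => simp [S_zero]
  | succ n => simp [S_succ]

lemma summable_absdiff {f g : ℕ → ℝ} (hf : Summable f) (hg : Summable g)
    (hf0 : ∀ t, 0 ≤ f t) (hg0 : ∀ t, 0 ≤ g t) : Summable (fun t => |f t - g t|) := by
  refine Summable.of_nonneg_of_le (fun t => abs_nonneg _) (fun t => ?_) (hf.add hg)
  calc |f t - g t| ≤ |f t| + |g t| := abs_sub _ _
    _ = f t + g t := by rw [abs_of_nonneg (hf0 t), abs_of_nonneg (hg0 t)]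

lemma summable_S_iter {f : ℕ → ℝ} (hf : Summable f) (k : ℕ) : Summable (S^[k] f) := by
  induction k with
  | zero => simpa using hf
  | succ k ih => rw [Function.iterate_succ_apply']; exact summable_S_iff.mpr ih

lemma S_iter_nonneg {f : ℕ → ℝ} (hf : ∀ t, 0 ≤ f t) (k : ℕ) (t : ℕ) : 0 ≤ S^[k] f t := by
  rw [S_iter]; split <;> [exact hf _; rfl]

/-- L1 distance between shifted-by-one Poisson and Poisson -/
lemma D_eq {l : ℝ} (hl : 0 < l) (t : ℕ) :
    |S (poisP l) t - poisP l t| = |(t:ℝ) - l| * poisP l t / l := by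
  cases t with
  | zero =>
      have h0 : 0 ≤ poisP l 0 := poisP_nonneg hl.le 0
      simp only [S_zero, Nat.cast_zero, zero_sub, abs_neg, abs_of_nonneg h0,
        abs_of_pos hl]
      field_simp
  | succ n =>
      rw [S_succ]
      have key : poisP l n = poisP l (n+1) * ((n:ℝ)+1) / l := by
        rw [mul_comm, poisP_succ]; field_simp
      rw [key]
      have hp := poisP_nonneg hl.le (n+1)
      have h1 : poisP l (n+1) * ((n:ℝ)+1) / l - poisP l (n+1)
          = (((n:ℝ)+1) - l) * poisP l (n+1) / l := by field_simp
      rw [h1, abs_div, abs_of_pos hl, abs_mul, abs_of_nonneg hp]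
      push_cast
      ring

lemma D_le {l : ℝ} (hl : 0 < l) :
    ∑' t, |S (poisP l) t - poisP l t| ≤ Real.sqrt l / l := by
  have he : ∀ t : ℕ, |S (poisP l) t - poisP l t| = |(t:ℝ) - l| * poisP l t / l := D_eq hl
  calc ∑' t, |S (poisP l) t - poisP l t| = ∑' t : ℕ, |(t:ℝ) - l| * poisP l t / l := by
        exact tsum_congr he
    _ = (∑' t : ℕ, |(t:ℝ) - l| * poisP l t) / l := by rw [tsum_div_const]
    _ ≤ Real.sqrt l / l := by gcongr; exact absmoment_le hl



/-- L1 distance of k-fold shift from identity, telescoping bound. -/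
lemma L1_iter_le {f : ℕ → ℝ} (hf : Summable f) (hf0 : ∀ t, 0 ≤ f t) (k : ℕ) :
    ∑' t, |S^[k] f t - f t| ≤ k * ∑' t, |S f t - f t| := by
  induction k with
  | zero => simp
  | succ k ih =>
      have hSk := summable_S_iter hf k
      have hSk1 := summable_S_iter hf (k+1)
      have hS1 := summable_S_iter hf 1
      have hS1' : Summable (S f) := by simpa using hS1
      have hk0 := S_iter_nonneg hf0 k
      have hk10 := S_iter_nonneg hf0 (k+1)
      have hS0 : ∀ t, 0 ≤ S f t := fun t => by simpa using S_iter_nonneg hf0 1 t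
      -- middle term: ∑ |S^[k+1] f - S f| = ∑ |S^[k] f - f|
      have hmid : ∑' t, |S^[k+1] f t - S f t| = ∑' t, |S^[k] f t - f t| := by
        have : ∀ t, |S^[k+1] f t - S f t| = S (fun u => |S^[k] f u - f u|) t := by
          intro t
          rw [Function.iterate_succ_apply']
          exact abs_S_sub _ _ t
        rw [tsum_congr this, tsum_S]
      have htri : ∀ t, |S^[k+1] f t - f t| ≤ |S^[k+1] f t - S f t| + |S f t - f t| :=
        fun t => abs_sub_le _ _ _
      have hA : Summable (fun t => |S^[k+1] f t - S f t|) :=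
        summable_absdiff hSk1 hS1' hk10 hS0
      have hB : Summable (fun t => |S f t - f t|) := summable_absdiff hS1' hf hS0 hf0
      have hL : Summable (fun t => |S^[k+1] f t - f t|) := summable_absdiff hSk1 hf hk10 hf0
      calc ∑' t, |S^[k+1] f t - f t| ≤ ∑' t, (|S^[k+1] f t - S f t| + |S f t - f t|) :=
            Summable.tsum_le_tsum htri hL (hA.add hB)
        _ = ∑' t, |S^[k+1] f t - S f t| + ∑' t, |S f t - f t| := Summable.tsum_add hA hB
        _ = ∑' t, |S^[k] f t - f t| + ∑' t, |S f t - f t| := by rw [hmid]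
        _ ≤ k * ∑' t, |S f t - f t| + ∑' t, |S f t - f t| := by
            have := ih
            gcongr
        _ = (k+1 : ℕ) * ∑' t, |S f t - f t| := by push_cast; ring

/-- Convolution identity for Poisson as a finite sum. -/
lemma poisP_add {a b : ℝ} (t : ℕ) :
    poisP (a + b) t = ∑ k ∈ Finset.range (t+1), poisP a k * poisP b (t - k) := by
  unfold poisP
  have hbin : (a + b) ^ t = ∑ k ∈ Finset.range (t+1), a ^ k * b ^ (t - k) * (t.choose k : ℝ) := by
    exact_mod_cast add_pow a b t
  rw [show (-(a+b)) = (-a) + (-b) by ring, Real.exp_add, hbin, Finset.mul_sum, Finset.sum_div]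
  refine Finset.sum_congr rfl (fun k hk => ?_)
  have hkt : k ≤ t := Nat.lt_succ_iff.mp (Finset.mem_range.mp hk)
  have hch : (t.choose k : ℝ) = (t.factorial : ℝ) / ((k.factorial : ℝ) * ((t-k).factorial : ℝ)) :=
    Nat.cast_choose ℝ hkt
  rw [hch]
  have h1 : (t.factorial : ℝ) ≠ 0 := by positivity
  have h2 : (k.factorial : ℝ) ≠ 0 := by positivity
  have h3 : ((t-k).factorial : ℝ) ≠ 0 := by positivity
  field_simp

/-- Convolution as a tsum against shifted pmfs. -/
lemma poisP_add_tsum {a b : ℝ} (t : ℕ) :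
    poisP (a + b) t = ∑' k : ℕ, poisP a k * S^[k] (poisP b) t := by
  rw [tsum_eq_sum (s := Finset.range (t+1)) (fun k hk => ?_), poisP_add t]
  · refine Finset.sum_congr rfl (fun k hk => ?_)
    have hkt : k ≤ t := Nat.lt_succ_iff.mp (Finset.mem_range.mp hk)
    rw [S_iter, if_pos hkt]
  · have hkt : ¬ k ≤ t := by
      intro h; exact hk (Finset.mem_range.mpr (Nat.lt_succ_iff.mpr h))
    rw [S_iter, if_neg hkt, mul_zero]



lemma L1_pair_le {f : ℕ → ℝ} (hf : Summable f) (hf0 : ∀ t, 0 ≤ f t) (s k : ℕ) :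
    ∑' t, |S^[s] f t - S^[k] f t| ≤ ((s:ℝ) + k) * ∑' t, |S f t - f t| := by
  have hA : Summable (fun t => |S^[s] f t - f t|) :=
    summable_absdiff (summable_S_iter hf s) hf (S_iter_nonneg hf0 s) hf0
  have hB : Summable (fun t => |f t - S^[k] f t|) := by
    simpa [abs_sub_comm] using
      summable_absdiff (summable_S_iter hf k) hf (S_iter_nonneg hf0 k) hf0
  have hL : Summable (fun t => |S^[s] f t - S^[k] f t|) :=
    summable_absdiff (summable_S_iter hf s) (summable_S_iter hf k)
      (S_iter_nonneg hf0 s) (S_iter_nonneg hf0 k)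
  calc ∑' t, |S^[s] f t - S^[k] f t|
      ≤ ∑' t, (|S^[s] f t - f t| + |f t - S^[k] f t|) :=
        Summable.tsum_le_tsum (fun t => abs_sub_le _ _ _) hL (hA.add hB)
    _ = ∑' t, |S^[s] f t - f t| + ∑' t, |f t - S^[k] f t| := Summable.tsum_add hA hB
    _ = ∑' t, |S^[s] f t - f t| + ∑' t, |S^[k] f t - f t| := by
        congr 1; exact tsum_congr (fun t => abs_sub_comm _ _)
    _ ≤ (s : ℝ) * ∑' t, |S f t - f t| + (k:ℝ) * ∑' t, |S f t - f t| := by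
        gcongr <;> [exact L1_iter_le hf hf0 s; exact L1_iter_le hf hf0 k]
    _ = ((s:ℝ) + k) * ∑' t, |S f t - f t| := by ring

lemma main_bound {l d : ℝ} (hl : 0 < l) (hd : 0 ≤ d) (s : ℕ) :
    ∑' t, |S^[s] (poisP l) t - poisP (l + d) t| ≤ ((s:ℝ) + d) * (Real.sqrt l / l) := by
  set p := poisP l with hp
  set q := poisP d with hq
  have hps : Summable p := (hasSum_poisP hl.le).summable
  have hp0 : ∀ t, 0 ≤ p t := poisP_nonneg hl.le
  have hq1 : HasSum q 1 := hasSum_poisP hd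
  have hqs : Summable q := hq1.summable
  have hq0 : ∀ k, 0 ≤ q k := poisP_nonneg hd
  have hqm : HasSum (fun k : ℕ => (k:ℝ) * q k) d := hasSum_mul_poisP hd
  set Dv := ∑' t, |S p t - p t| with hDv
  have hDv0 : 0 ≤ Dv := tsum_nonneg (fun t => abs_nonneg _)
  have hDle : Dv ≤ Real.sqrt l / l := D_le hl
  have hp_le_one : ∀ n, p n ≤ 1 := fun n =>
    le_hasSum (hasSum_poisP hl.le) n (fun m _ => hp0 m)
  have hSk_le_one : ∀ k t, S^[k] p t ≤ 1 := by
    intro k t; rw [S_iter]; split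
    · exact hp_le_one _
    · norm_num
  -- g t k
  set g : ℕ → ℕ → ℝ := fun t k => q k * |S^[s] p t - S^[k] p t| with hg
  have hg0 : ∀ t k, 0 ≤ g t k := fun t k => mul_nonneg (hq0 k) (abs_nonneg _)
  have hgk : ∀ k, Summable (fun t => g t k) := fun k =>
    (summable_absdiff (summable_S_iter hps s) (summable_S_iter hps k)
      (S_iter_nonneg hp0 s) (S_iter_nonneg hp0 k)).mul_left (q k)
  have htk_le : ∀ k : ℕ, ∑' t, g t k ≤ q k * (((s:ℝ) + k) * Dv) := by
    intro k
    rw [hg, tsum_mul_left]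
    exact mul_le_mul_of_nonneg_left (L1_pair_le hps hp0 s k) (hq0 k)
  have hRsum : HasSum (fun k : ℕ => q k * (((s:ℝ) + k) * Dv)) (((s:ℝ) + d) * Dv) := by
    have h := (hq1.mul_left ((s:ℝ) * Dv)).add (hqm.mul_left Dv)
    have he : (fun k : ℕ => (s:ℝ) * Dv * q k + Dv * ((k:ℝ) * q k))
        = fun k : ℕ => q k * (((s:ℝ) + k) * Dv) := by funext k; ring
    rw [he] at h
    have : (s:ℝ) * Dv * 1 + Dv * d = ((s:ℝ) + d) * Dv := by ring
    rwa [this] at h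
  have hksum : Summable (fun k => ∑' t, g t k) :=
    Summable.of_nonneg_of_le (fun k => tsum_nonneg (fun t => hg0 t k)) htk_le hRsum.summable
  -- summability of the uncurried function (k,t) ↦ g t k
  have hF : Summable (Function.uncurry (fun k t => g t k)) := by
    refine (summable_prod_of_nonneg ?_).mpr ⟨fun k => hgk k, hksum⟩
    intro kt; exact hg0 kt.2 kt.1
  have hswap : ∑' t, ∑' k, g t k = ∑' k, ∑' t, g t k := Summable.tsum_comm hF
  have htsum_g : ∀ t, Summable (fun k => g t k) := by
    intro t
    refine Summable.of_nonneg_of_le (fun k => hg0 t k) (fun k => ?_) (hqs.mul_right 2)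
    have h1 : |S^[s] p t - S^[k] p t| ≤ 2 := by
      have hs1 := hSk_le_one s t
      have hk1 := hSk_le_one k t
      have hs0 := S_iter_nonneg hp0 s t
      have hk0 := S_iter_nonneg hp0 k t
      rw [abs_le]; constructor <;> linarith
    calc g t k ≤ q k * 2 := mul_le_mul_of_nonneg_left h1 (hq0 k)
      _ = q k * 2 := rfl
  have houter : Summable (fun t => ∑' k, g t k) := by
    have := hF.prod_symm.prod
    simpa [Function.uncurry] using this
  -- pointwise bound
  have hpt : ∀ t, |S^[s] p t - poisP (l + d) t| ≤ ∑' k, g t k := by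
    intro t
    have hconv : poisP (l + d) t = ∑' k : ℕ, q k * S^[k] p t := by
      rw [add_comm l d]; exact poisP_add_tsum t
    have hu : Summable (fun k => q k * S^[k] p t) := by
      refine Summable.of_nonneg_of_le
        (fun k => mul_nonneg (hq0 k) (S_iter_nonneg hp0 k t)) (fun k => ?_) hqs
      have := hSk_le_one k t
      calc q k * S^[k] p t ≤ q k * 1 := mul_le_mul_of_nonneg_left this (hq0 k)
        _ = q k := mul_one _
    have hc : Summable (fun k => q k * S^[s] p t) := hqs.mul_right _
    have hid : S^[s] p t = ∑' k, q k * S^[s] p t := by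
      rw [tsum_mul_right, hq1.tsum_eq, one_mul]
    rw [hconv, hid, ← Summable.tsum_sub hc hu]
    have he : (fun k => q k * S^[s] p t - q k * S^[k] p t)
        = fun k => q k * (S^[s] p t - S^[k] p t) := by funext k; ring
    rw [he]
    have habs : |∑' k, q k * (S^[s] p t - S^[k] p t)| ≤ ∑' k, |q k * (S^[s] p t - S^[k] p t)| := by
      have hsum : Summable (fun k => ‖q k * (S^[s] p t - S^[k] p t)‖) := by
        simp only [Real.norm_eq_abs]
        refine Summable.of_nonneg_of_le (fun k => abs_nonneg _) (fun k => ?_) (htsum_g t)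
        rw [abs_mul, abs_of_nonneg (hq0 k)]
      simpa only [Real.norm_eq_abs] using norm_tsum_le_tsum_norm hsum
    calc |∑' k, q k * (S^[s] p t - S^[k] p t)| ≤ ∑' k, |q k * (S^[s] p t - S^[k] p t)| := habs
      _ = ∑' k, g t k := by
          exact tsum_congr (fun k => by rw [abs_mul, abs_of_nonneg (hq0 k)])
  -- assemble
  have hLsum : Summable (fun t => |S^[s] p t - poisP (l + d) t|) :=
    summable_absdiff (summable_S_iter hps s) (hasSum_poisP (by linarith)).summable
      (S_iter_nonneg hp0 s) (poisP_nonneg (by linarith))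
  calc ∑' t, |S^[s] p t - poisP (l + d) t| ≤ ∑' t, ∑' k, g t k :=
        Summable.tsum_le_tsum hpt hLsum houter
    _ = ∑' k, ∑' t, g t k := hswap
    _ ≤ ∑' k, q k * (((s:ℝ) + k) * Dv) := Summable.tsum_le_tsum htk_le hksum hRsum.summable
    _ = ((s:ℝ) + d) * Dv := hRsum.tsum_eq
    _ ≤ ((s:ℝ) + d) * (Real.sqrt l / l) := by
        have hsd : 0 ≤ (s:ℝ) + d := by positivity
        exact mul_le_mul_of_nonneg_left hDle hsd



/-- Shifting a Poisson distribution by a fixed integer `s` and decreasing its mean by a fixed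
amount `μ₀` becomes negligible in total variation as the mean `μ → ∞`. -/
theorem stmt0 (μ₀ : ℝ) (hμ₀ : 0 ≤ μ₀) (s : ℕ) :
    Tendsto (fun μ : ℝ =>
        ∑' t : ℕ, |(if s ≤ t then poisP (μ - μ₀) (t - s) else 0) - poisP μ t|)
      atTop (nhds 0) := by
  have h1 : Tendsto (fun μ : ℝ => μ - μ₀) atTop atTop :=
    tendsto_atTop_add_const_right atTop (-μ₀) tendsto_id
  have hsq : Tendsto Real.sqrt atTop atTop := by
    refine tendsto_atTop_atTop.mpr (fun b => ⟨b^2, fun a ha => ?_⟩)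
    calc b ≤ |b| := le_abs_self b
      _ = Real.sqrt (b^2) := (Real.sqrt_sq_eq_abs b).symm
      _ ≤ Real.sqrt a := Real.sqrt_le_sqrt ha
  have h2 : Tendsto (fun μ : ℝ => Real.sqrt (μ - μ₀)) atTop atTop := hsq.comp h1
  have h3 : Tendsto (fun μ : ℝ => (Real.sqrt (μ - μ₀))⁻¹) atTop (nhds 0) :=
    h2.inv_tendsto_atTop
  have hG : Tendsto (fun μ : ℝ => ((s:ℝ) + μ₀) * (Real.sqrt (μ - μ₀) / (μ - μ₀)))
      atTop (nhds 0) := by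
    have := h3.const_mul ((s:ℝ) + μ₀)
    simpa [Real.sqrt_div_self] using this
  refine tendsto_of_tendsto_of_tendsto_of_le_of_le' tendsto_const_nhds hG ?_ ?_
  · filter_upwards with μ
    exact tsum_nonneg fun t => abs_nonneg _
  · filter_upwards [eventually_ge_atTop (μ₀ + 1)] with μ hμ
    have hl : 0 < μ - μ₀ := by linarith
    have heq : (fun t : ℕ => |(if s ≤ t then poisP (μ - μ₀) (t - s) else 0) - poisP μ t|)
        = fun t : ℕ => |S^[s] (poisP (μ - μ₀)) t - poisP ((μ - μ₀) + μ₀) t| := by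
      funext t
      rw [← S_iter (poisP (μ - μ₀)) s t, sub_add_cancel]
    rw [heq]
    exact main_bound hl hμ₀ s
end

section
/- Let A, B be events with P[B] > 0, let N be a random variable taking values in ℕ, and suppose P[A | B, N = n] = P[A | N = n] whenever P[B ∩ {N = n}] > 0. Then |P[A | B] − P[A]| ≤ ∑_{n=0}^∞ |P[N = n | B] − P[N = n]|. -/
open MeasureTheory

set_option maxHeartbeats 1000000

/-- If `A` and `B` are conditionally independent given the value of `N`, then the distance between
`P[A | B]` and `P[A]` is bounded by the total variation distance between the conditional and
unconditional laws of `N`. All conditional probabilities are elementary ratios. -/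
theorem stmt4 {Ω : Type*} [MeasurableSpace Ω] (P : Measure Ω) [IsProbabilityMeasure P]
    (A B : Set Ω) (hAm : MeasurableSet A) (hBm : MeasurableSet B)
    (N : Ω → ℕ) (hNm : Measurable N) (hB : P B ≠ 0)
    (h : ∀ n : ℕ, P (B ∩ {ω | N ω = n}) ≠ 0 →
      (P (A ∩ (B ∩ {ω | N ω = n}))).toReal / (P (B ∩ {ω | N ω = n})).toReal
        = (P (A ∩ {ω | N ω = n})).toReal / (P {ω | N ω = n}).toReal) :
    |(P (A ∩ B)).toReal / (P B).toReal - (P A).toReal|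
      ≤ ∑' n : ℕ,
          |(P ({ω | N ω = n} ∩ B)).toReal / (P B).toReal - (P {ω | N ω = n}).toReal| := by
  have hPBpos : 0 < (P B).toReal := ENNReal.toReal_pos hB (measure_ne_top P B)
  -- splitting any measurable set along the values of N
  have key : ∀ S : Set Ω, MeasurableSet S →
      HasSum (fun n => (P (S ∩ {ω | N ω = n})).toReal) (P S).toReal := by
    intro S hS
    have hU : (⋃ n, S ∩ {ω | N ω = n}) = S := by
      ext ω; simp
    have hd : Pairwise (Function.onFun Disjoint fun n => S ∩ {ω | N ω = n}) := by
      intro m n hmn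
      simp only [Function.onFun, Set.disjoint_left]
      rintro ω ⟨-, hm⟩ ⟨-, hn⟩
      exact hmn ((hm : N ω = m).symm.trans hn)
    have hmeas : ∀ n, MeasurableSet (S ∩ {ω | N ω = n}) :=
      fun n => hS.inter (hNm (measurableSet_singleton n))
    have hsum : ∑' n, P (S ∩ {ω | N ω = n}) = P S := by
      rw [← measure_iUnion hd hmeas, hU]
    have hfin : ∀ n, P (S ∩ {ω | N ω = n}) ≠ ⊤ := fun n => measure_ne_top _ _
    have hsble := ENNReal.summable_toReal (hsum ▸ measure_ne_top P S)
    refine hsble.hasSum_iff.mpr ?_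
    rw [← ENNReal.tsum_toReal_eq hfin, hsum]
  have hAB := key (A ∩ B) (hAm.inter hBm)
  have hA := key A hAm
  have hBN := key B hBm
  have hp : HasSum (fun n => (P {ω | N ω = n}).toReal) (P Set.univ).toReal := by
    have := key Set.univ MeasurableSet.univ
    simpa using this
  -- left hand side as a sum
  have hg : HasSum
      (fun n => (P ((A ∩ B) ∩ {ω | N ω = n})).toReal / (P B).toReal
        - (P (A ∩ {ω | N ω = n})).toReal)
      ((P (A ∩ B)).toReal / (P B).toReal - (P A).toReal) :=
    (hAB.div_const _).sub hA
  rw [← hg.tsum_eq]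
  -- pointwise bound
  have hpt : ∀ n, |(P ((A ∩ B) ∩ {ω | N ω = n})).toReal / (P B).toReal
        - (P (A ∩ {ω | N ω = n})).toReal|
      ≤ |(P ({ω | N ω = n} ∩ B)).toReal / (P B).toReal - (P {ω | N ω = n}).toReal| := by
    intro n
    have hassoc : (A ∩ B) ∩ {ω | N ω = n} = A ∩ (B ∩ {ω | N ω = n}) := Set.inter_assoc _ _ _
    have hcomm : {ω | N ω = n} ∩ B = B ∩ {ω | N ω = n} := Set.inter_comm _ _
    rw [hassoc, hcomm]
    set x := (P (A ∩ (B ∩ {ω | N ω = n}))).toReal with hx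
    set a := (P (A ∩ {ω | N ω = n})).toReal with ha
    set c := (P (B ∩ {ω | N ω = n})).toReal with hc
    set p := (P {ω | N ω = n}).toReal with hpdef
    have hap : a ≤ p :=
      ENNReal.toReal_mono (measure_ne_top _ _) (measure_mono Set.inter_subset_right)
    have ha0 : 0 ≤ a := ENNReal.toReal_nonneg
    have hp0 : 0 ≤ p := ENNReal.toReal_nonneg
    by_cases hcz : P (B ∩ {ω | N ω = n}) = 0
    · have hx0 : x = 0 := by
        rw [hx, measure_mono_null Set.inter_subset_right hcz, ENNReal.toReal_zero]
      have hc0 : c = 0 := by rw [hc, hcz, ENNReal.toReal_zero]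
      rw [hx0, hc0]
      simp only [zero_div, zero_sub, abs_neg]
      rw [abs_of_nonneg ha0, abs_of_nonneg hp0]
      exact hap
    · have hcpos : 0 < c := ENNReal.toReal_pos hcz (measure_ne_top _ _)
      have hcp : c ≤ p :=
        ENNReal.toReal_mono (measure_ne_top _ _) (measure_mono Set.inter_subset_right)
      have hppos : 0 < p := lt_of_lt_of_le hcpos hcp
      have hratio := h n hcz
      have hxval : x = (a / p) * c := by
        have : x = (x / c) * c := by field_simp
        rw [this, hratio]
      have haval : a = (a / p) * p := by field_simp
      have hq1 : a / p ≤ 1 := (div_le_one hppos).mpr hap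
      have hq0 : 0 ≤ a / p := div_nonneg ha0 hp0
      have hdiff : x / (P B).toReal - a = (a / p) * (c / (P B).toReal - p) := by
        rw [mul_sub, ← mul_div_assoc, ← hxval, ← haval]
      calc |x / (P B).toReal - a|
          = (a / p) * |c / (P B).toReal - p| := by
            rw [hdiff, abs_mul, abs_of_nonneg hq0]
        _ ≤ 1 * |c / (P B).toReal - p| := by
            exact mul_le_mul_of_nonneg_right hq1 (abs_nonneg _)
        _ = |c / (P B).toReal - p| := one_mul _
  -- summability of the right hand side
  have hrhs : Summable (fun n =>
      |(P ({ω | N ω = n} ∩ B)).toReal / (P B).toReal - (P {ω | N ω = n}).toReal|) := by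
    have hb : Summable (fun n => (P ({ω | N ω = n} ∩ B)).toReal / (P B).toReal) := by
      refine Summable.div_const ?_ _
      have heq : (fun n => (P ({ω | N ω = n} ∩ B)).toReal)
          = fun n => (P (B ∩ {ω | N ω = n})).toReal := by
        funext n; rw [Set.inter_comm]
      rw [heq]; exact hBN.summable
    exact (summable_abs_iff.mpr (hb.sub hp.summable))
  have hlhs : Summable (fun n => |(P ((A ∩ B) ∩ {ω | N ω = n})).toReal / (P B).toReal
        - (P (A ∩ {ω | N ω = n})).toReal|) := summable_abs_iff.mpr hg.summable
  calc |∑' n, ((P ((A ∩ B) ∩ {ω | N ω = n})).toReal / (P B).toReal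
        - (P (A ∩ {ω | N ω = n})).toReal)|
      ≤ ∑' n, |(P ((A ∩ B) ∩ {ω | N ω = n})).toReal / (P B).toReal
        - (P (A ∩ {ω | N ω = n})).toReal| := by
        have := norm_tsum_le_tsum_norm (f := fun n =>
          (P ((A ∩ B) ∩ {ω | N ω = n})).toReal / (P B).toReal
            - (P (A ∩ {ω | N ω = n})).toReal) (by simpa [Real.norm_eq_abs] using hlhs)
        simpa [Real.norm_eq_abs] using this
    _ ≤ _ := Summable.tsum_le_tsum hpt hlhs hrhs
end

section
/- Let N be a nonnegative-integer-valued random variable, B an event with P[B] > 0, and C, D ∈ ℕ thresholds such that P[N ≥ D] < εP[B]/4 and, for some auxiliary variable η with P[η ≥ C] < εP[B]/4. Suppose ∑_{n=0}^∞ |P[N = n | η = m] − P[N = n]| < ε/(4C) for every m < C, and that P[N = n | B, η = m] = P[N = n | η = m] for all n, m. Then ∑_{n=0}^∞ |P[N = n | B] − P[N = n]| ≤ 3ε/4. -/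
open MeasureTheory

private lemma part_tsum {Ω : Type*} [MeasurableSpace Ω] (P : Measure Ω)
    (f : Ω → ℕ) (hf : Measurable f) (A : Set Ω) (hA : MeasurableSet A) (k : ℕ) :
    P (A ∩ {ω | k ≤ f ω}) = ∑' m : ℕ, P (A ∩ {ω | f ω = m + k}) := by
  rw [← measure_iUnion]
  · congr 1
    ext ω
    simp only [Set.mem_iUnion, Set.mem_inter_iff, Set.mem_setOf_eq]
    constructor
    · rintro ⟨hAω, hk⟩; exact ⟨f ω - k, hAω, by omega⟩
    · rintro ⟨m, hAω, hm⟩; exact ⟨hAω, by omega⟩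
  · intro i j hij
    simp only [Set.disjoint_left, Set.mem_inter_iff, Set.mem_setOf_eq]
    rintro ω ⟨-, hi⟩ ⟨-, hj⟩
    omega
  · intro m
    exact hA.inter (hf (measurableSet_singleton (m + k)))

private lemma part_tsum_zero {Ω : Type*} [MeasurableSpace Ω] (P : Measure Ω)
    (f : Ω → ℕ) (hf : Measurable f) (A : Set Ω) (hA : MeasurableSet A) :
    P A = ∑' m : ℕ, P (A ∩ {ω | f ω = m}) := by
  have h := part_tsum P f hf A hA 0
  simpa using h

private lemma part_real {Ω : Type*} [MeasurableSpace Ω] (P : Measure Ω) [IsFiniteMeasure P]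
    (f : Ω → ℕ) (hf : Measurable f) (A : Set Ω) (hA : MeasurableSet A) :
    Summable (fun m => (P (A ∩ {ω | f ω = m})).toReal) ∧
      (P A).toReal = ∑' m : ℕ, (P (A ∩ {ω | f ω = m})).toReal := by
  have h := part_tsum_zero P f hf A hA
  constructor
  · apply ENNReal.summable_toReal
    rw [← h]; exact measure_ne_top P A
  · rw [h, ENNReal.tsum_toReal_eq (fun m => measure_ne_top P _)]

/-- The key total variation estimate: if `N` is conditionally independent of `B` given `η`,
the conditional law of `N` given `{η = m}` is close to its unconditional law for `m < C`,
and the tails `{η ≥ C}`, `{N ≥ D}` are small, then the total variation distance between the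
conditional law of `N` given `B` and its unconditional law is at most `3ε/4`. -/
theorem stmt5 {Ω : Type*} [MeasurableSpace Ω] (P : Measure Ω) [IsProbabilityMeasure P]
    (N η : Ω → ℕ) (hNm : Measurable N) (hηm : Measurable η)
    (B : Set Ω) (hBm : MeasurableSet B) (hB : P B ≠ 0)
    (ε : ℝ) (hε : 0 < ε) (C D : ℕ)
    (hD : (P {ω | D ≤ N ω}).toReal < ε * (P B).toReal / 4)
    (hC : (P {ω | C ≤ η ω}).toReal < ε * (P B).toReal / 4)
    (h1 : ∀ m < C, ∑' n : ℕ,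
        |(P ({ω | N ω = n} ∩ {ω | η ω = m})).toReal / (P {ω | η ω = m}).toReal
          - (P {ω | N ω = n}).toReal| < ε / (4 * C))
    (h2 : ∀ n m : ℕ, P (B ∩ {ω | η ω = m}) ≠ 0 →
      (P ({ω | N ω = n} ∩ (B ∩ {ω | η ω = m}))).toReal / (P (B ∩ {ω | η ω = m})).toReal
        = (P ({ω | N ω = n} ∩ {ω | η ω = m})).toReal / (P {ω | η ω = m}).toReal) :
    ∑' n : ℕ, |(P ({ω | N ω = n} ∩ B)).toReal / (P B).toReal - (P {ω | N ω = n}).toReal|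
      ≤ 3 * ε / 4 := by
  classical
  have hPBne : P B ≠ ⊤ := measure_ne_top P B
  have hPBpos : 0 < (P B).toReal := ENNReal.toReal_pos hB hPBne
  set PB : ℝ := (P B).toReal with hPBdef
  set p : ℕ → ℝ := fun n => (P {ω | N ω = n}).toReal with hp
  set a : ℕ → ℕ → ℝ := fun n m => (P ({ω | N ω = n} ∩ (B ∩ {ω | η ω = m}))).toReal with ha
  set b : ℕ → ℝ := fun m => (P (B ∩ {ω | η ω = m})).toReal with hb
  set E : Set Ω := B ∩ {ω | C ≤ η ω} with hE
  set e : ℝ := (P E).toReal with he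
  set r : ℕ → ℝ := fun n => (P ({ω | N ω = n} ∩ E)).toReal with hr
  set A : ℕ → ℝ := fun n => (P ({ω | N ω = n} ∩ B)).toReal with hAdef
  have hNset : ∀ n, MeasurableSet {ω | N ω = n} := fun n => hNm (measurableSet_singleton n)
  have hηset : ∀ m, MeasurableSet {ω | η ω = m} := fun m => hηm (measurableSet_singleton m)
  -- basic positivity
  have hp0 : ∀ n, 0 ≤ p n := fun n => ENNReal.toReal_nonneg
  have ha0 : ∀ n m, 0 ≤ a n m := fun n m => ENNReal.toReal_nonneg
  have hb0 : ∀ m, 0 ≤ b m := fun m => ENNReal.toReal_nonneg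
  have hr0 : ∀ n, 0 ≤ r n := fun n => ENNReal.toReal_nonneg
  have he0 : 0 ≤ e := ENNReal.toReal_nonneg
  have hap : ∀ n m, a n m ≤ p n := fun n m =>
    ENNReal.toReal_mono (measure_ne_top P _) (measure_mono Set.inter_subset_left)
  have hrp : ∀ n, r n ≤ p n := fun n =>
    ENNReal.toReal_mono (measure_ne_top P _) (measure_mono Set.inter_subset_left)
  -- summability of p and its sum
  have hpP := part_real P N hNm Set.univ MeasurableSet.univ
  have hp_summable : Summable p := by
    have := hpP.1
    simpa [Set.univ_inter] using this
  have hp_sum : ∑' n, p n = 1 := by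
    have := hpP.2
    simp only [Set.univ_inter, measure_univ, ENNReal.toReal_one] at this
    exact this.symm
  -- split of A n
  have haS : ∀ n, Summable (fun m => a n m) := by
    intro n
    have := (part_real P η hηm ({ω | N ω = n} ∩ B) ((hNset n).inter hBm)).1
    simpa [Set.inter_assoc] using this
  have hA_tsum : ∀ n, A n = ∑' m, a n m := by
    intro n
    have := (part_real P η hηm ({ω | N ω = n} ∩ B) ((hNset n).inter hBm)).2
    simpa [Set.inter_assoc] using this
  have hr_eq : ∀ n, r n = ∑' m, a n (m + C) := by
    intro n
    have h := part_tsum P η hηm ({ω | N ω = n} ∩ B) ((hNset n).inter hBm) C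
    have hset : ({ω | N ω = n} ∩ B) ∩ {ω | C ≤ η ω} = {ω | N ω = n} ∩ E := by
      rw [hE, Set.inter_assoc]
    rw [hset] at h
    rw [hr]
    simp only
    rw [h, ENNReal.tsum_toReal_eq (fun m => measure_ne_top P _)]
    apply tsum_congr
    intro m
    rw [ha]
    simp only [Set.inter_assoc]
  have hA_split : ∀ n, A n = (∑ m ∈ Finset.range C, a n m) + r n := by
    intro n
    rw [hA_tsum n, ← Summable.sum_add_tsum_nat_add C (haS n), ← hr_eq n]
  -- split of PB
  have hbS : Summable b := (part_real P η hηm B hBm).1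
  have hPB_tsum : PB = ∑' m, b m := (part_real P η hηm B hBm).2
  have he_eq : e = ∑' m, b (m + C) := by
    have h := part_tsum P η hηm B hBm C
    rw [he, hE]
    rw [h, ENNReal.tsum_toReal_eq (fun m => measure_ne_top P _)]
  have hPB_split : PB = (∑ m ∈ Finset.range C, b m) + e := by
    rw [hPB_tsum, ← Summable.sum_add_tsum_nat_add C hbS, ← he_eq]
  -- sum of r
  have hrP := part_real P N hNm E (hBm.inter (hηm measurableSet_Ici))
  have hr_summable : Summable r := by
    have := hrP.1
    apply Summable.congr this
    intro n
    rw [hr]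
    simp only [Set.inter_comm]
  have hr_sum : ∑' n, r n = e := by
    rw [he, hrP.2]
    apply tsum_congr
    intro n
    rw [hr]
    simp only [Set.inter_comm]
  -- e is small
  have he_small : e ≤ ε * PB / 4 := by
    have h1 : e ≤ (P {ω | C ≤ η ω}).toReal :=
      ENNReal.toReal_mono (measure_ne_top P _) (measure_mono Set.inter_subset_right)
    linarith [hC]
  -- the finite part estimate
  have hS_key : ∀ m ∈ Finset.range C,
      Summable (fun n => |a n m - b m * p n|) ∧
        ∑' n, |a n m - b m * p n| ≤ b m * (ε / (4 * C)) := by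
    intro m hm
    have hmC : m < C := Finset.mem_range.mp hm
    have hsum : Summable (fun n => |a n m - b m * p n|) := by
      apply Summable.of_nonneg_of_le (fun n => abs_nonneg _)
        (fun n => ?_) (hp_summable.mul_left (1 + b m))
      have h1 := hap n m
      have h2 := ha0 n m
      have h3 := hp0 n
      have h4 := hb0 m
      rw [abs_le]
      constructor <;> nlinarith
    refine ⟨hsum, ?_⟩
    by_cases hbm : b m = 0
    · have hab : ∀ n, a n m = 0 := by
        intro n
        have h1 : a n m ≤ b m :=
          ENNReal.toReal_mono (measure_ne_top P _) (measure_mono Set.inter_subset_right)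
        have := ha0 n m
        linarith
      have : ∀ n, |a n m - b m * p n| = 0 := by
        intro n; rw [hab n, hbm]; simp
      rw [tsum_congr this, tsum_zero, hbm, zero_mul]
    · -- b m ≠ 0
      have hBη : P (B ∩ {ω | η ω = m}) ≠ 0 := by
        intro h0
        apply hbm
        rw [hb]; simp only [h0, ENNReal.toReal_zero]
      have hdm : (P {ω | η ω = m}).toReal ≠ 0 := by
        intro h0
        apply hbm
        have h1 : b m ≤ (P {ω | η ω = m}).toReal :=
          ENNReal.toReal_mono (measure_ne_top P _) (measure_mono Set.inter_subset_right)
        have := hb0 m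
        linarith [ENNReal.toReal_nonneg (a := P {ω | η ω = m})]
      have hform : ∀ n, a n m = b m *
          ((P ({ω | N ω = n} ∩ {ω | η ω = m})).toReal / (P {ω | η ω = m}).toReal) := by
        intro n
        have := h2 n m hBη
        rw [ha, hb]
        simp only
        rw [← this]
        field_simp
        rw [mul_div_cancel_right₀ _ (ENNReal.toReal_ne_zero.mpr ⟨hBη, measure_ne_top P _⟩)]
      have habs : ∀ n, |a n m - b m * p n| = b m *
          |(P ({ω | N ω = n} ∩ {ω | η ω = m})).toReal / (P {ω | η ω = m}).toReal - p n| := by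
        intro n
        rw [hform n, ← mul_sub, abs_mul, abs_of_nonneg (hb0 m)]
      rw [tsum_congr habs, tsum_mul_left]
      exact mul_le_mul_of_nonneg_left (h1 m hmC).le (hb0 m)
  -- total finite part
  set S : ℕ → ℝ := fun n => ∑ m ∈ Finset.range C, |a n m - b m * p n| with hSdef
  have hS_summable : Summable S := summable_sum (fun m hm => (hS_key m hm).1)
  have hS_sum : ∑' n, S n ≤ PB * (ε / 4) := by
    rw [hSdef]
    simp only
    rw [Summable.tsum_finsetSum (fun m hm => (hS_key m hm).1)]
    have hstep1 : ∑ m ∈ Finset.range C, ∑' n, |a n m - b m * p n|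
        ≤ ∑ m ∈ Finset.range C, b m * (ε / (4 * C)) :=
      Finset.sum_le_sum (fun m hm => (hS_key m hm).2)
    have hbsum : ∑ m ∈ Finset.range C, b m ≤ PB := by
      rw [hPB_split]; linarith
    have hstep2 : ∑ m ∈ Finset.range C, b m * (ε / (4 * C))
        = (∑ m ∈ Finset.range C, b m) * (ε / (4 * C)) := by
      rw [Finset.sum_mul]
    rcases Nat.eq_zero_or_pos C with hC0 | hC1
    · subst hC0
      simp at hstep1 ⊢
      calc ∑ m ∈ Finset.range 0, ∑' n, |a n m - b m * p n| = 0 := by simp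
        _ ≤ PB * (ε / 4) := by positivity
    · have hεC : ε / (4 * C) ≤ ε / 4 := by
        apply div_le_div_of_nonneg_left hε.le (by norm_num)
        have : (1 : ℝ) ≤ C := by exact_mod_cast hC1
        linarith
      have hεC0 : 0 ≤ ε / (4 * C) := by positivity
      calc ∑ m ∈ Finset.range C, ∑' n, |a n m - b m * p n|
          ≤ (∑ m ∈ Finset.range C, b m) * (ε / (4 * C)) := by rw [← hstep2]; exact hstep1
        _ ≤ PB * (ε / (4 * C)) := by
            apply mul_le_mul_of_nonneg_right hbsum hεC0
        _ ≤ PB * (ε / 4) := by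
            apply mul_le_mul_of_nonneg_left hεC hPBpos.le
  -- pointwise bound
  have hpoint : ∀ n, |A n / PB - p n| ≤ (S n + r n + e * p n) / PB := by
    intro n
    have hkey : A n - PB * p n
        = (∑ m ∈ Finset.range C, (a n m - b m * p n)) + (r n - e * p n) := by
      rw [hA_split n, hPB_split, Finset.sum_sub_distrib, ← Finset.sum_mul]
      ring
    have h1 : A n / PB - p n = (A n - PB * p n) / PB := by
      field_simp
    rw [h1, abs_div, abs_of_pos hPBpos]
    apply (div_le_div_iff_of_pos_right hPBpos).mpr
    calc |A n - PB * p n|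
        ≤ |∑ m ∈ Finset.range C, (a n m - b m * p n)| + |r n - e * p n| := by
          rw [hkey]; exact abs_add_le _ _
      _ ≤ S n + (r n + e * p n) := by
          apply add_le_add
          · exact le_trans (Finset.abs_sum_le_sum_abs _ _) (le_refl _)
          · have h2 : 0 ≤ e * p n := mul_nonneg he0 (hp0 n)
            rw [abs_le]; constructor <;> linarith [hr0 n]
      _ = S n + r n + e * p n := by ring
  -- right-hand side summability and sum
  have hRHS_summable : Summable (fun n => (S n + r n + e * p n) / PB) := by
    apply Summable.div_const
    exact (hS_summable.add hr_summable).add (hp_summable.mul_left e)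
  have hRHS_sum : ∑' n, (S n + r n + e * p n) / PB
      = ((∑' n, S n) + e + e) / PB := by
    rw [tsum_div_const]
    congr 1
    rw [Summable.tsum_add (hS_summable.add hr_summable) (hp_summable.mul_left e),
      Summable.tsum_add hS_summable hr_summable, hr_sum, tsum_mul_left, hp_sum, mul_one]
  -- conclude
  have hLHS_summable : Summable (fun n => |A n / PB - p n|) :=
    Summable.of_nonneg_of_le (fun n => abs_nonneg _) hpoint hRHS_summable
  calc ∑' n, |A n / PB - p n|
      ≤ ∑' n, (S n + r n + e * p n) / PB := Summable.tsum_le_tsum hpoint hLHS_summable hRHS_summable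
    _ = ((∑' n, S n) + e + e) / PB := hRHS_sum
    _ ≤ 3 * ε / 4 := by
        rw [div_le_iff₀ hPBpos]
        nlinarith [hS_sum, he_small]
end

section
/- Let x, y, z, v be four distinct points in ℤ^d and suppose P_a[H_b < ∞] ≤ c·⟨ab⟩^{-(d-2)} for simple random walk, where ⟨ab⟩ = 1+|a−b|₁. If a random walk path started at x hits all of y, z, v, then summing over orderings gives P_x[H_y<∞, H_z<∞, H_v<∞] ≤ c'·⟨{x,y,z,v}⟩^{-(d-2)}, where ⟨{x,y,z,v}⟩ is the minimal spanning tree product. -/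
open MeasureTheory

private def hasseN : SimpleGraph ℕ where
  Adj u v := u + 1 = v ∨ v + 1 = u
  symm := ⟨fun u v h => Or.symm h⟩
  loopless := ⟨fun u h => by omega⟩

private lemma reach_iff {V : Type*} {G : SimpleGraph V} (f : V → Prop)
    (h : ∀ u v, G.Adj u v → (f u ↔ f v)) {u v : V} (hr : G.Reachable u v) : f u ↔ f v := by
  obtain ⟨w⟩ := hr
  induction w with
  | nil => rfl
  | cons ha p ih => exact (h _ _ ha).trans ih

private lemma hasseN_acyclic : hasseN.IsAcyclic := by
  rw [SimpleGraph.isAcyclic_iff_forall_adj_isBridge]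
  intro v w hvw
  rw [SimpleGraph.isBridge_iff]
  refine fun hr => ?_
  have key := reach_iff (fun u => u ≤ min v w) (fun u u' ha => ?_) hr
  · have : hasseN.Adj v w := hvw
    rcases this with h | h <;> omega
  · simp only [SimpleGraph.deleteEdges_adj, SimpleGraph.sdiff_adj, SimpleGraph.fromEdgeSet_adj, Set.mem_singleton_iff,
      Sym2.eq_iff] at ha
    obtain ⟨ha1, ha2⟩ := ha
    have hne : u ≠ u' := ha1.ne
    rcases ha1 with h | h <;> rcases hvw with h' | h' <;> simp only [not_and_or, not_or] at ha2 <;> omega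


/-- `pgauge x y = 1 + |x - y|₁` for `x, y ∈ ℤ^d`. -/
noncomputable def pgauge {d : ℕ} (x y : Fin d → ℤ) : ℝ := 1 + ∑ i, |(x i : ℝ) - (y i : ℝ)|

/-- The weight `⟨a b⟩` of an (unordered) edge of a graph on a finite set of points of `ℤ^d`. -/
noncomputable def edgeWeight {d : ℕ} {W : Finset (Fin d → ℤ)} (e : Sym2 W) : ℝ :=
  Sym2.lift (⟨fun a b => pgauge (a : Fin d → ℤ) (b : Fin d → ℤ), fun a b => by
    simp only [pgauge, abs_sub_comm]⟩ :
      { f : W → W → ℝ // ∀ a b, f a b = f b a }) e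

/-- `⟨W⟩`: the minimum over spanning trees `τ` on the finite vertex set `W ⊂ ℤ^d` of the
product `∏_{{a,b} ∈ τ} (1 + |a-b|₁)`. -/
noncomputable def treeWeight {d : ℕ} (W : Finset (Fin d → ℤ)) : ℝ :=
  sInf {p : ℝ | ∃ G : SimpleGraph W, G.IsTree ∧
    p = ∏ e ∈ (Set.toFinite G.edgeSet).toFinset, edgeWeight e}

section tree
variable {d : ℕ}

private def idx4 (p0 p1 p2 p3 u : Fin d → ℤ) : ℕ :=
  if u = p0 then 0 else if u = p1 then 1 else if u = p2 then 2 else if u = p3 then 3 else 4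

private def pathG (p0 p1 p2 p3 : Fin d → ℤ) : SimpleGraph ({p0,p1,p2,p3} : Finset (Fin d → ℤ)) :=
  hasseN.comap (fun u => idx4 p0 p1 p2 p3 u.1)

private lemma mem4 (p0 p1 p2 p3 : Fin d → ℤ) (u : ({p0,p1,p2,p3} : Finset (Fin d → ℤ))) :
    u.1 = p0 ∨ u.1 = p1 ∨ u.1 = p2 ∨ u.1 = p3 := by
  have h := u.2
  simp only [Finset.mem_insert, Finset.mem_singleton] at h
  exact h

private lemma idx4_inj (p0 p1 p2 p3 : Fin d → ℤ) (h01 : p0 ≠ p1) (h02 : p0 ≠ p2) (h03 : p0 ≠ p3)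
    (h12 : p1 ≠ p2) (h13 : p1 ≠ p3) (h23 : p2 ≠ p3) :
    Function.Injective (fun u : ({p0,p1,p2,p3} : Finset (Fin d → ℤ)) => idx4 p0 p1 p2 p3 u.1) := by
  have h10 := h01.symm; have h20 := h02.symm; have h30 := h03.symm
  have h21 := h12.symm; have h31 := h13.symm; have h32 := h23.symm
  intro u v huv
  simp only at huv
  apply Subtype.ext
  rcases mem4 p0 p1 p2 p3 u with h|h|h|h <;> rcases mem4 p0 p1 p2 p3 v with h'|h'|h'|h' <;>
    rw [h, h'] <;> rw [h, h'] at huv <;>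
    simp_all [idx4]

private lemma pathG_isTree (p0 p1 p2 p3 : Fin d → ℤ) (h01 : p0 ≠ p1) (h02 : p0 ≠ p2)
    (h03 : p0 ≠ p3) (h12 : p1 ≠ p2) (h13 : p1 ≠ p3) (h23 : p2 ≠ p3) :
    (pathG p0 p1 p2 p3).IsTree := by
  have h10 := h01.symm; have h20 := h02.symm; have h30 := h03.symm
  have h21 := h12.symm; have h31 := h13.symm; have h32 := h23.symm
  set W : Finset (Fin d → ℤ) := {p0,p1,p2,p3} with hW
  have hq0 : p0 ∈ W := by simp [hW]
  have hq1 : p1 ∈ W := by simp [hW]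
  have hq2 : p2 ∈ W := by simp [hW]
  have hq3 : p3 ∈ W := by simp [hW]
  set q0 : W := ⟨p0, hq0⟩
  set q1 : W := ⟨p1, hq1⟩
  set q2 : W := ⟨p2, hq2⟩
  set q3 : W := ⟨p3, hq3⟩
  have a01 : (pathG p0 p1 p2 p3).Adj q0 q1 := by
    show hasseN.Adj (idx4 p0 p1 p2 p3 p0) (idx4 p0 p1 p2 p3 p1)
    simp [idx4, h10, hasseN]
  have a12 : (pathG p0 p1 p2 p3).Adj q1 q2 := by
    show hasseN.Adj (idx4 p0 p1 p2 p3 p1) (idx4 p0 p1 p2 p3 p2)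
    simp [idx4, h10, h20, h21, hasseN]
  have a23 : (pathG p0 p1 p2 p3).Adj q2 q3 := by
    show hasseN.Adj (idx4 p0 p1 p2 p3 p2) (idx4 p0 p1 p2 p3 p3)
    simp [idx4, h20, h21, h30, h31, h32, hasseN]
  constructor
  · haveI : Nonempty ({p0,p1,p2,p3} : Finset (Fin d → ℤ)) := ⟨q0⟩
    apply SimpleGraph.Connected.mk
    intro u v
    have key : ∀ w : W, (pathG p0 p1 p2 p3).Reachable w q0 := by
      intro w
      rcases mem4 p0 p1 p2 p3 w with h|h|h|h
      · have : w = q0 := Subtype.ext h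
        rw [this]
      · have : w = q1 := Subtype.ext h
        rw [this]; exact a01.symm.reachable
      · have : w = q2 := Subtype.ext h
        rw [this]; exact (a12.symm.reachable).trans a01.symm.reachable
      · have : w = q3 := Subtype.ext h
        rw [this]; exact (a23.symm.reachable).trans ((a12.symm.reachable).trans a01.symm.reachable)
    exact (key u).trans (key v).symm
  · intro v c hc
    have := hc.map
      (f := (⟨fun u => idx4 p0 p1 p2 p3 u.1, fun h => h⟩ : pathG p0 p1 p2 p3 →g hasseN))
      (by exact idx4_inj p0 p1 p2 p3 h01 h02 h03 h12 h13 h23)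
    exact hasseN_acyclic _ this

private lemma edgeWeight_mk {W : Finset (Fin d → ℤ)} (a b : W) :
    edgeWeight s(a, b) = pgauge a.1 b.1 := rfl

private lemma pathG_edgeSet (p0 p1 p2 p3 : Fin d → ℤ) (h01 : p0 ≠ p1) (h02 : p0 ≠ p2)
    (h03 : p0 ≠ p3) (h12 : p1 ≠ p2) (h13 : p1 ≠ p3) (h23 : p2 ≠ p3) :
    (Set.toFinite (pathG p0 p1 p2 p3).edgeSet).toFinset =
      {s((⟨p0, by simp⟩ : ({p0,p1,p2,p3} : Finset (Fin d → ℤ))), ⟨p1, by simp⟩),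
       s(⟨p1, by simp⟩, ⟨p2, by simp⟩), s(⟨p2, by simp⟩, ⟨p3, by simp⟩)} := by
  have h10 := h01.symm; have h20 := h02.symm; have h30 := h03.symm
  have h21 := h12.symm; have h31 := h13.symm; have h32 := h23.symm
  ext e
  rw [Set.Finite.mem_toFinset]
  induction e using Sym2.ind with
  | _ u v =>
    rw [SimpleGraph.mem_edgeSet]
    rcases mem4 p0 p1 p2 p3 u with h|h|h|h <;> rcases mem4 p0 p1 p2 p3 v with h'|h'|h'|h' <;>
      simp_all [pathG, idx4, hasseN, Sym2.eq_iff, Subtype.ext_iff]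

private lemma one_le_pgauge (x y : Fin d → ℤ) : 1 ≤ pgauge x y := by
  have : (0:ℝ) ≤ ∑ i, |(x i : ℝ) - (y i : ℝ)| := Finset.sum_nonneg fun i _ => abs_nonneg _
  simp only [pgauge]; linarith

private lemma one_le_edgeWeight {W : Finset (Fin d → ℤ)} (e : Sym2 W) : 1 ≤ edgeWeight e := by
  induction e using Sym2.ind with
  | _ a b => rw [edgeWeight_mk]; exact one_le_pgauge _ _

private lemma one_le_mem_treeSet {W : Finset (Fin d → ℤ)} {p : ℝ}
    (hp : p ∈ {p : ℝ | ∃ G : SimpleGraph W, G.IsTree ∧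
      p = ∏ e ∈ (Set.toFinite G.edgeSet).toFinset, edgeWeight e}) : 1 ≤ p := by
  obtain ⟨G, _, rfl⟩ := hp
  have := Finset.prod_le_prod (f := fun _ => (1:ℝ)) (g := edgeWeight)
    (s := (Set.toFinite G.edgeSet).toFinset)
    (fun _ _ => zero_le_one) (fun e _ => one_le_edgeWeight e)
  simpa using this

private lemma treeWeight_le_path (p0 p1 p2 p3 : Fin d → ℤ) (h01 : p0 ≠ p1) (h02 : p0 ≠ p2)
    (h03 : p0 ≠ p3) (h12 : p1 ≠ p2) (h13 : p1 ≠ p3) (h23 : p2 ≠ p3) :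
    treeWeight {p0,p1,p2,p3} ≤ pgauge p0 p1 * pgauge p1 p2 * pgauge p2 p3 := by
  have h10 := h01.symm; have h20 := h02.symm; have h30 := h03.symm
  have h21 := h12.symm; have h31 := h13.symm; have h32 := h23.symm
  have hmem : pgauge p0 p1 * pgauge p1 p2 * pgauge p2 p3 ∈
      {p : ℝ | ∃ G : SimpleGraph ({p0,p1,p2,p3} : Finset (Fin d → ℤ)), G.IsTree ∧
        p = ∏ e ∈ (Set.toFinite G.edgeSet).toFinset, edgeWeight e} := by
    refine ⟨pathG p0 p1 p2 p3, pathG_isTree p0 p1 p2 p3 h01 h02 h03 h12 h13 h23, ?_⟩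
    rw [pathG_edgeSet p0 p1 p2 p3 h01 h02 h03 h12 h13 h23]
    rw [Finset.prod_insert (by simp [Sym2.eq_iff, Subtype.ext_iff, h01, h02, h12, h13]),
      Finset.prod_insert (by simp [Sym2.eq_iff, Subtype.ext_iff, h12, h13, h23]),
      Finset.prod_singleton, edgeWeight_mk, edgeWeight_mk, edgeWeight_mk, mul_assoc]
  exact csInf_le ⟨1, fun p hp => one_le_mem_treeSet hp⟩ hmem

private lemma one_le_treeWeight (p0 p1 p2 p3 : Fin d → ℤ) (h01 : p0 ≠ p1) (h02 : p0 ≠ p2)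
    (h03 : p0 ≠ p3) (h12 : p1 ≠ p2) (h13 : p1 ≠ p3) (h23 : p2 ≠ p3) :
    1 ≤ treeWeight ({p0,p1,p2,p3} : Finset (Fin d → ℤ)) := by
  refine le_csInf ⟨_, ⟨pathG p0 p1 p2 p3, pathG_isTree p0 p1 p2 p3 h01 h02 h03 h12 h13 h23, rfl⟩⟩
    fun p hp => one_le_mem_treeSet hp

end tree

/-- A random relation `R` on `ℤ^d` has stochastic dimension `d - α` if there is `c > 0` with
`c P[xRy] ≥ ⟨xy⟩^{-α}` and `P[xRy, zRv] ≤ c ⟨xy⟩^{-α} ⟨zv⟩^{-α} + c ⟨xyzv⟩^{-α}`. -/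
def HasStochDim {d : ℕ} {Ω : Type*} [MeasurableSpace Ω] (P : Measure Ω)
    (R : Ω → Set ((Fin d → ℤ) × (Fin d → ℤ))) (α : ℝ) : Prop :=
  ∃ c : ℝ, 0 < c ∧
    (∀ x y : Fin d → ℤ, pgauge x y ^ (-α) ≤ c * (P {ω | (x, y) ∈ R ω}).toReal) ∧
    (∀ x y z v : Fin d → ℤ,
      (P {ω | (x, y) ∈ R ω ∧ (z, v) ∈ R ω}).toReal ≤
        c * (pgauge x y ^ (-α)) * (pgauge z v ^ (-α)) + c * treeWeight {x, y, z, v} ^ (-α))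

/-- The hitting time `H_y = inf {n ≥ 1 : γ n = y}` of `y` by the path `γ` (with value `⊤` if
`y` is never hit). -/
noncomputable def hitTime {d : ℕ} (y : Fin d → ℤ) (γ : ℕ → (Fin d → ℤ)) : ℕ∞ :=
  ⨅ (n : ℕ) (_ : 1 ≤ n ∧ γ n = y), (n : ℕ∞)

private lemma hit_spec {d : ℕ} {y : Fin d → ℤ} {γ : ℕ → (Fin d → ℤ)}
    (h : hitTime y γ < ⊤) : ∃ n : ℕ, 1 ≤ n ∧ γ n = y ∧ hitTime y γ = n := by
  classical
  have hS : ∃ n : ℕ, 1 ≤ n ∧ γ n = y := by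
    by_contra h'
    push_neg at h'
    have : hitTime y γ = ⊤ := by
      rw [hitTime, iInf_eq_top]
      intro n
      rw [iInf_eq_top]
      intro hn
      exact absurd hn.2 (h' n hn.1)
    rw [this] at h
    exact absurd h (lt_irrefl _)
  refine ⟨Nat.find hS, (Nat.find_spec hS).1, (Nat.find_spec hS).2, le_antisymm ?_ ?_⟩
  · exact iInf_le_of_le (Nat.find hS) (iInf_le _ (Nat.find_spec hS))
  · refine le_iInf fun n => le_iInf fun hn => ?_
    exact_mod_cast Nat.find_min' hS hn

private lemma hit_ne {d : ℕ} {y z : Fin d → ℤ} {γ : ℕ → (Fin d → ℤ)} (hyz : y ≠ z)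
    (hy : hitTime y γ < ⊤) (hz : hitTime z γ < ⊤) : hitTime y γ ≠ hitTime z γ := by
  obtain ⟨n, _, hny, hn⟩ := hit_spec hy
  obtain ⟨m, _, hmz, hm⟩ := hit_spec hz
  rw [hn, hm]
  intro h
  have : n = m := by exact_mod_cast h
  exact hyz (hny ▸ this ▸ hmz)

/-- If the laws `P x` of simple random walk satisfy `P_a[H_b < ∞] ≤ c ⟨a,b⟩^{-(d-2)}` (together
with the strong Markov chain inequality), then summing over the orderings in which `y, z, v` are
hit gives `P_x[H_y < ∞, H_z < ∞, H_v < ∞] ≤ c' ⟨{x,y,z,v}⟩^{-(d-2)}`, where `⟨{x,y,z,v}⟩` is the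
minimal spanning-tree product. -/
theorem stmt17 {d : ℕ} (hd : 3 ≤ d)
    (P : (Fin d → ℤ) → Measure (ℕ → Fin d → ℤ))
    (hP : ∀ x, IsProbabilityMeasure (P x))
    (c : ℝ) (hc : 0 < c)
    (hHit : ∀ a b : Fin d → ℤ, a ≠ b →
      ((P a) {γ | hitTime b γ < ⊤}).toReal ≤ c * pgauge a b ^ (-(d - 2 : ℝ)))
    (hMarkov : ∀ x a b e : Fin d → ℤ,
      ((P x) {γ | hitTime a γ < hitTime b γ ∧ hitTime b γ < hitTime e γ ∧
          hitTime e γ < ⊤}).toReal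
        ≤ ((P x) {γ | hitTime a γ < ⊤}).toReal * ((P a) {γ | hitTime b γ < ⊤}).toReal *
            ((P b) {γ | hitTime e γ < ⊤}).toReal) :
    ∃ c' : ℝ, 0 < c' ∧ ∀ x y z v : Fin d → ℤ,
      x ≠ y → x ≠ z → x ≠ v → y ≠ z → y ≠ v → z ≠ v →
      ((P x) {γ | hitTime y γ < ⊤ ∧ hitTime z γ < ⊤ ∧ hitTime v γ < ⊤}).toReal
        ≤ c' * treeWeight ({x, y, z, v} : Finset (Fin d → ℤ)) ^ (-(d - 2 : ℝ)) := by
  refine ⟨6 * c ^ 3, by positivity, fun x y z v hxy hxz hxv hyz hyv hzv => ?_⟩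
  haveI := hP x
  set α : ℝ := (d : ℝ) - 2 with hα
  have hα1 : (1 : ℝ) ≤ α := by
    have : (3 : ℝ) ≤ (d : ℝ) := by exact_mod_cast hd
    rw [hα]; linarith
  set A : (Fin d → ℤ) → (Fin d → ℤ) → (Fin d → ℤ) → Set (ℕ → Fin d → ℤ) :=
    fun a b e => {γ | hitTime a γ < hitTime b γ ∧ hitTime b γ < hitTime e γ ∧
      hitTime e γ < ⊤} with hA
  set T : ℝ := treeWeight ({x, y, z, v} : Finset (Fin d → ℤ)) with hT
  -- key bound for one ordering
  have key : ∀ a b e : Fin d → ℤ, x ≠ a → x ≠ b → x ≠ e → a ≠ b → a ≠ e → b ≠ e →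
      ({x, a, b, e} : Finset (Fin d → ℤ)) = {x, y, z, v} →
      ((P x) (A a b e)).toReal ≤ c ^ 3 * T ^ (-α) := by
    intro a b e hxa hxb hxe hab hae hbe hset
    have f1 := hHit x a hxa
    have f2 := hHit a b hab
    have f3 := hHit b e hbe
    have hp1 : (0:ℝ) < pgauge x a := lt_of_lt_of_le one_pos (one_le_pgauge x a)
    have hp2 : (0:ℝ) < pgauge a b := lt_of_lt_of_le one_pos (one_le_pgauge a b)
    have hp3 : (0:ℝ) < pgauge b e := lt_of_lt_of_le one_pos (one_le_pgauge b e)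
    have hT1 : (1:ℝ) ≤ T := by
      rw [hT, ← hset]
      exact one_le_treeWeight x a b e hxa hxb hxe hab hae hbe
    have htw : T ≤ pgauge x a * pgauge a b * pgauge b e := by
      rw [hT, ← hset]
      exact treeWeight_le_path x a b e hxa hxb hxe hab hae hbe
    have hrp : (pgauge x a * pgauge a b * pgauge b e) ^ (-α) ≤ T ^ (-α) :=
      Real.rpow_le_rpow_of_nonpos (lt_of_lt_of_le one_pos hT1) htw (by linarith)
    calc ((P x) (A a b e)).toReal
        ≤ ((P x) {γ | hitTime a γ < ⊤}).toReal * ((P a) {γ | hitTime b γ < ⊤}).toReal *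
            ((P b) {γ | hitTime e γ < ⊤}).toReal := hMarkov x a b e
      _ ≤ (c * pgauge x a ^ (-α)) * (c * pgauge a b ^ (-α)) * (c * pgauge b e ^ (-α)) := by
          exact mul_le_mul (mul_le_mul f1 f2 ENNReal.toReal_nonneg (by positivity)) f3
            ENNReal.toReal_nonneg (by positivity)
      _ = c ^ 3 * (pgauge x a ^ (-α) * pgauge a b ^ (-α) * pgauge b e ^ (-α)) := by ring
      _ = c ^ 3 * (pgauge x a * pgauge a b * pgauge b e) ^ (-α) := by
          rw [Real.mul_rpow (by positivity) (by positivity),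
            Real.mul_rpow (by positivity) (by positivity)]
      _ ≤ c ^ 3 * T ^ (-α) := by
          have hc3 : (0:ℝ) ≤ c ^ 3 := by positivity
          exact mul_le_mul_of_nonneg_left hrp hc3
  -- the event is covered by the six orderings
  have hsub : {γ : ℕ → Fin d → ℤ | hitTime y γ < ⊤ ∧ hitTime z γ < ⊤ ∧ hitTime v γ < ⊤} ⊆
      A y z v ∪ A y v z ∪ A z y v ∪ A z v y ∪ A v y z ∪ A v z y := by
    rintro γ ⟨hy, hz, hv⟩
    have d1 := hit_ne hyz hy hz
    have d2 := hit_ne hyv hy hv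
    have d3 := hit_ne hzv hz hv
    simp only [Set.mem_union, hA, Set.mem_setOf_eq]
    rcases d1.lt_or_gt with h1 | h1 <;> rcases d2.lt_or_gt with h2 | h2 <;>
      rcases d3.lt_or_gt with h3 | h3
    · exact Or.inl (Or.inl (Or.inl (Or.inl (Or.inl ⟨h1, h3, hv⟩))))
    · exact Or.inl (Or.inl (Or.inl (Or.inl (Or.inr ⟨h2, h3, hz⟩))))
    · exact absurd ((h1.trans h3).trans h2) (lt_irrefl _)
    · exact Or.inl (Or.inr ⟨h2, h1, hz⟩)
    · exact Or.inl (Or.inl (Or.inl (Or.inr ⟨h1, h2, hv⟩)))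
    · exact absurd ((h2.trans h3).trans h1) (lt_irrefl _)
    · exact Or.inl (Or.inl (Or.inr ⟨h3, h2, hy⟩))
    · exact Or.inr ⟨h3, h1, hy⟩
  -- union bound
  have hU : (P x) {γ : ℕ → Fin d → ℤ | hitTime y γ < ⊤ ∧ hitTime z γ < ⊤ ∧ hitTime v γ < ⊤}
      ≤ (P x) (A y z v) + (P x) (A y v z) + (P x) (A z y v) + (P x) (A z v y) +
        (P x) (A v y z) + (P x) (A v z y) := by
    refine (measure_mono hsub).trans ?_
    calc (P x) (A y z v ∪ A y v z ∪ A z y v ∪ A z v y ∪ A v y z ∪ A v z y)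
        ≤ (P x) (A y z v ∪ A y v z ∪ A z y v ∪ A z v y ∪ A v y z) + (P x) (A v z y) :=
          measure_union_le _ _
      _ ≤ ((P x) (A y z v ∪ A y v z ∪ A z y v ∪ A z v y) + (P x) (A v y z)) + (P x) (A v z y) :=
          add_le_add_left (measure_union_le _ _) _
      _ ≤ (((P x) (A y z v ∪ A y v z ∪ A z y v) + (P x) (A z v y)) + (P x) (A v y z)) +
          (P x) (A v z y) := add_le_add_left (add_le_add_left (measure_union_le _ _) _) _
      _ ≤ ((((P x) (A y z v ∪ A y v z) + (P x) (A z y v)) + (P x) (A z v y)) + (P x) (A v y z)) +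
          (P x) (A v z y) := add_le_add_left (add_le_add_left (add_le_add_left
            (measure_union_le _ _) _) _) _
      _ ≤ (((((P x) (A y z v) + (P x) (A y v z)) + (P x) (A z y v)) + (P x) (A z v y)) +
          (P x) (A v y z)) + (P x) (A v z y) := add_le_add_left (add_le_add_left
            (add_le_add_left (add_le_add_left (measure_union_le _ _) _) _) _) _
  have hne : ∀ s : Set (ℕ → Fin d → ℤ), (P x) s ≠ ⊤ := fun s => measure_ne_top _ _
  have hUr : ((P x) {γ : ℕ → Fin d → ℤ | hitTime y γ < ⊤ ∧ hitTime z γ < ⊤ ∧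
      hitTime v γ < ⊤}).toReal
      ≤ ((P x) (A y z v)).toReal + ((P x) (A y v z)).toReal + ((P x) (A z y v)).toReal +
        ((P x) (A z v y)).toReal + ((P x) (A v y z)).toReal + ((P x) (A v z y)).toReal := by
    have h1 := ENNReal.toReal_mono (by
      simp only [Ne, ENNReal.add_eq_top, hne, or_self, not_false_eq_true]) hU
    rw [ENNReal.toReal_add (by simp [ENNReal.add_eq_top, hne]) (hne _),
      ENNReal.toReal_add (by simp [ENNReal.add_eq_top, hne]) (hne _),
      ENNReal.toReal_add (by simp [ENNReal.add_eq_top, hne]) (hne _),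
      ENNReal.toReal_add (by simp [ENNReal.add_eq_top, hne]) (hne _),
      ENNReal.toReal_add (hne _) (hne _)] at h1
    exact h1
  refine hUr.trans ?_
  have e1 : ({x, y, z, v} : Finset (Fin d → ℤ)) = {x, y, z, v} := rfl
  have e2 : ({x, y, v, z} : Finset (Fin d → ℤ)) = {x, y, z, v} := by
    ext w; simp only [Finset.mem_insert, Finset.mem_singleton]; tauto
  have e3 : ({x, z, y, v} : Finset (Fin d → ℤ)) = {x, y, z, v} := by
    ext w; simp only [Finset.mem_insert, Finset.mem_singleton]; tauto
  have e4 : ({x, z, v, y} : Finset (Fin d → ℤ)) = {x, y, z, v} := by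
    ext w; simp only [Finset.mem_insert, Finset.mem_singleton]; tauto
  have e5 : ({x, v, y, z} : Finset (Fin d → ℤ)) = {x, y, z, v} := by
    ext w; simp only [Finset.mem_insert, Finset.mem_singleton]; tauto
  have e6 : ({x, v, z, y} : Finset (Fin d → ℤ)) = {x, y, z, v} := by
    ext w; simp only [Finset.mem_insert, Finset.mem_singleton]; tauto
  have k1 := key y z v hxy hxz hxv hyz hyv hzv e1
  have k2 := key y v z hxy hxv hxz hyv hyz hzv.symm e2
  have k3 := key z y v hxz hxy hxv hyz.symm hzv hyv e3
  have k4 := key z v y hxz hxv hxy hzv hyz.symm hyv.symm e4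
  have k5 := key v y z hxv hxy hxz hyv.symm hzv.symm hyz e5
  have k6 := key v z y hxv hxz hxy hzv.symm hyv.symm hyz.symm e6
  have : (6 : ℝ) * c ^ 3 * T ^ (-α) = c ^ 3 * T ^ (-α) + c ^ 3 * T ^ (-α) + c ^ 3 * T ^ (-α) +
      c ^ 3 * T ^ (-α) + c ^ 3 * T ^ (-α) + c ^ 3 * T ^ (-α) := by ring
  rw [this]
  exact add_le_add (add_le_add (add_le_add (add_le_add (add_le_add k1 k2) k3) k4) k5) k6
end
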